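/- Let θ₁, θ₂, θ₃ be real numbers in the open interval (0, π) with θ₁ + θ₂ + θ₃ = 2π, and set X = cos θ₁, Y = cos θ₂, Z = cos θ₃. Then the 4×4 symmetric matrix M with rows (1, Z, Y, X), (Z, 1, X, Y), (Y, X, 1, Z), (X, Y, Z, 1) has determinant det M = −4·sin²θ₁·sin²θ₂·sin²θ₃. -/

import Mathlib

/-- For `θ₁, θ₂, θ₃ ∈ (0, π)` with `θ₁ + θ₂ + θ₃ = 2π`, setting
`X = cos θ₁`, `Y = cos θ₂`, `Z = cos θ₃`, the symmetric matrix `M` with rows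
`(1,Z,Y,X), (Z,1,X,Y), (Y,X,1,Z), (X,Y,Z,1)` has
`det M = −4·sin²θ₁·sin²θ₂·sin²θ₃`. -/
theorem stmt_15 (θ₁ θ₂ θ₃ : ℝ)
    (h₁ : θ₁ ∈ Set.Ioo 0 Real.pi) (h₂ : θ₂ ∈ Set.Ioo 0 Real.pi)
    (h₃ : θ₃ ∈ Set.Ioo 0 Real.pi) (hsum : θ₁ + θ₂ + θ₃ = 2 * Real.pi) :
    (Matrix.of
      ![![1, Real.cos θ₃, Real.cos θ₂, Real.cos θ₁],
        ![Real.cos θ₃, 1, Real.cos θ₁, Real.cos θ₂],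
        ![Real.cos θ₂, Real.cos θ₁, 1, Real.cos θ₃],
        ![Real.cos θ₁, Real.cos θ₂, Real.cos θ₃, 1]]).det
      = -4 * Real.sin θ₁ ^ 2 * Real.sin θ₂ ^ 2 * Real.sin θ₃ ^ 2 := by
  have h3 : θ₃ = 2 * Real.pi - θ₁ - θ₂ := by linarith
  have hc : Real.cos θ₃ = Real.cos θ₁ * Real.cos θ₂ - Real.sin θ₁ * Real.sin θ₂ := by
    rw [h3]
    rw [show 2 * Real.pi - θ₁ - θ₂ = 2 * Real.pi - (θ₁ + θ₂) by ring]
    rw [Real.cos_sub, Real.cos_two_pi, Real.sin_two_pi, Real.cos_add]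
    ring
  have hs : Real.sin θ₃ = -(Real.sin θ₁ * Real.cos θ₂ + Real.cos θ₁ * Real.sin θ₂) := by
    rw [h3]
    rw [show 2 * Real.pi - θ₁ - θ₂ = 2 * Real.pi - (θ₁ + θ₂) by ring]
    rw [Real.sin_sub, Real.cos_two_pi, Real.sin_two_pi, Real.sin_add]
    ring
  have p1 := Real.sin_sq_add_cos_sq θ₁
  have p2 := Real.sin_sq_add_cos_sq θ₂
  simp [Matrix.det_succ_row_zero, Fin.sum_univ_succ, Fin.succAbove, Fin.castSucc, Fin.castAdd, Fin.castLE, hc, hs]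
  linear_combination ((-1:ℝ) + Real.cos θ₁^2*Real.cos θ₂^4
      + (-4:ℝ)*Real.sin θ₁*Real.cos θ₁*Real.sin θ₂*Real.cos θ₂^3
      + (6:ℝ)*Real.sin θ₁^2*Real.sin θ₂^2*Real.cos θ₂^2 + (2:ℝ)*Real.cos θ₂^2
      + (-2:ℝ)*Real.cos θ₁^2*Real.cos θ₂^2
      + (4:ℝ)*Real.sin θ₁*Real.cos θ₁*Real.sin θ₂*Real.cos θ₂
      + (-2:ℝ)*Real.sin θ₁^2*Real.sin θ₂^2 + (-1:ℝ)*Real.cos θ₂^4 + Real.cos θ₁^2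
      + (4:ℝ)*Real.sin θ₁^2*Real.sin θ₂^4 + (-1:ℝ)*Real.sin θ₁^2*Real.cos θ₂^4
      + (2:ℝ)*Real.sin θ₁^2*Real.cos θ₂^2 + (-1:ℝ)*Real.sin θ₁^2) * p1
    + ((4:ℝ)*Real.sin θ₁^2*Real.sin θ₂^2 + (-3:ℝ)*Real.sin θ₁^4*Real.sin θ₂^2
      + (4:ℝ)*Real.sin θ₁^3*Real.cos θ₁*Real.sin θ₂*Real.cos θ₂
      + Real.sin θ₁^4*Real.cos θ₂^2 + (-1:ℝ)*Real.sin θ₁^4) * p2
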